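/- arXiv:2303.03293 — 3 statements merged into one kernel-verified Lean document; each statement's English description precedes it below -/
import Mathlib

section
/- (Multinomial-to-binomial stick-breaking decomposition.) Let E ≥ 1, let w : Fin E → ℕ with total n = ∑_{e} w(e), and let θ : Fin E → ℝ satisfy θ(e) ≥ 0 for all e, ∑_{e} θ(e) = 1, and ∑_{i<e} θ(i) < 1 for every e. Define for each e the remaining count r(e) := n − ∑_{i<e} w(i) and the stick-breaking fraction θ̂(e) := θ(e) / (1 − ∑_{i<e} θ(i)). Then the multinomial probability weight factors as a product of binomial probability weights: (n! / ∏_{e} w(e)!) · ∏_{e} θ(e)^{w(e)} = ∏_{e} [ C(r(e), w(e)) · θ̂(e)^{w(e)} · (1 − θ̂(e))^{r(e) − w(e)} ], where all factorials and binomial coefficients are cast to ℝ and C(n,k) denotes the binomial coefficient. -/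
open Finset

lemma prod_Iio_fin_val {M : Type*} [CommMonoid M] {E : ℕ} (g : ℕ → M) (e : Fin E) :
    ∏ i ∈ Finset.Iio e, g i.val = ∏ i ∈ Finset.range e.val, g i := by
  rw [← Nat.Iio_eq_range, ← Fin.map_valEmbedding_Iio, Finset.prod_map]
  rfl

lemma sum_Iio_fin_val {M : Type*} [AddCommMonoid M] {E : ℕ} (g : ℕ → M) (e : Fin E) :
    ∑ i ∈ Finset.Iio e, g i.val = ∑ i ∈ Finset.range e.val, g i := by
  rw [← Nat.Iio_eq_range, ← Fin.map_valEmbedding_Iio, Finset.sum_map]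
  rfl

lemma aux_stick (E : ℕ) : ∀ (w : ℕ → ℕ) (θ : ℕ → ℝ) (n : ℕ),
    n = ∑ e ∈ range E, w e →
    (∀ e, e < E → 0 ≤ θ e) → (∑ e ∈ range E, θ e = 1) →
    (∀ e, e < E → ∑ i ∈ range e, θ i < 1) →
    (Nat.factorial n : ℝ) / (∏ e ∈ range E, (Nat.factorial (w e) : ℝ)) *
        ∏ e ∈ range E, θ e ^ w e =
      ∏ e ∈ range E,
        ((Nat.choose (n - ∑ i ∈ range e, w i) (w e) : ℝ) *
          (θ e / (1 - ∑ i ∈ range e, θ i)) ^ w e *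
          (1 - θ e / (1 - ∑ i ∈ range e, θ i)) ^
            ((n - ∑ i ∈ range e, w i) - w e)) := by
  induction E with
  | zero => intro w θ n hn h0 hsum hlt; simp at hsum
  | succ E ih =>
    intro w θ n hn h0 hsum hlt
    rcases Nat.eq_zero_or_pos E with hE0 | hEpos
    · subst hE0
      simp only [zero_add, range_one, sum_singleton, prod_singleton, range_zero,
        sum_empty, Nat.sub_zero, sub_zero, div_one] at hn hsum ⊢
      subst hn
      rw [hsum]
      simp [Nat.choose_self, div_self (show ((Nat.factorial (w 0)):ℝ) ≠ 0 by positivity)]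
    -- peel index 0
    have ht0 : θ 0 < 1 := by simpa using hlt 1 (by omega)
    have ht0' : (0:ℝ) < 1 - θ 0 := by linarith
    have ht0ne : (1:ℝ) - θ 0 ≠ 0 := ne_of_gt ht0'
    have hsplitw := Finset.sum_range_succ' w E
    have hn0le : w 0 ≤ n := by omega
    have hsum' : ∑ e ∈ range E, (θ (e+1) / (1 - θ 0)) = 1 := by
      rw [← Finset.sum_div, div_eq_one_iff_eq ht0ne]
      have := hsum
      rw [Finset.sum_range_succ'] at this
      linarith
    have key := ih (fun e => w (e+1)) (fun e => θ (e+1) / (1 - θ 0)) (n - w 0)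
      (by beta_reduce; omega)
      (fun e he => div_nonneg (h0 (e+1) (by omega)) ht0'.le)
      hsum'
      (fun e he => by
        have h1 : ∑ i ∈ range (e+1), θ i < 1 := hlt (e+1) (by omega)
        rw [Finset.sum_range_succ'] at h1
        rw [← Finset.sum_div, div_lt_one ht0']
        linarith)
    beta_reduce at key
    -- rewrite the goal's RHS product, peeling index 0
    rw [Finset.prod_range_succ' (f := fun e =>
        ((Nat.choose (n - ∑ i ∈ range e, w i) (w e) : ℝ) *
          (θ e / (1 - ∑ i ∈ range e, θ i)) ^ w e *
          (1 - θ e / (1 - ∑ i ∈ range e, θ i)) ^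
            ((n - ∑ i ∈ range e, w i) - w e)))]
    -- rewrite each shifted factor
    have hfac : ∀ e ∈ range E,
        ((Nat.choose (n - ∑ i ∈ range (e+1), w i) (w (e+1)) : ℝ) *
          (θ (e+1) / (1 - ∑ i ∈ range (e+1), θ i)) ^ w (e+1) *
          (1 - θ (e+1) / (1 - ∑ i ∈ range (e+1), θ i)) ^
            ((n - ∑ i ∈ range (e+1), w i) - w (e+1)))
        = ((Nat.choose ((n - w 0) - ∑ i ∈ range e, w (i+1)) (w (e+1)) : ℝ) *
          ((θ (e+1) / (1-θ 0)) / (1 - ∑ i ∈ range e, (θ (i+1) / (1-θ 0)))) ^ w (e+1) *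
          (1 - (θ (e+1) / (1-θ 0)) / (1 - ∑ i ∈ range e, (θ (i+1) / (1-θ 0)))) ^
            (((n - w 0) - ∑ i ∈ range e, w (i+1)) - w (e+1))) := by
      intro e he
      have hwsum := Finset.sum_range_succ' w e
      have hw : n - ∑ i ∈ range (e+1), w i = (n - w 0) - ∑ i ∈ range e, w (i+1) := by
        omega
      have hT : ∑ i ∈ range (e+1), θ i = θ 0 + ∑ i ∈ range e, θ (i+1) := by
        rw [Finset.sum_range_succ']; ring
      have hTpos : (0:ℝ) < 1 - ∑ i ∈ range (e+1), θ i := by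
        have := hlt (e+1) (by simp at he; omega)
        linarith
      have hTne : (1:ℝ) - ∑ i ∈ range (e+1), θ i ≠ 0 := ne_of_gt hTpos
      have hden : 1 - ∑ i ∈ range e, (θ (i+1) / (1-θ 0)) =
          (1 - ∑ i ∈ range (e+1), θ i) / (1 - θ 0) := by
        rw [← Finset.sum_div, hT]
        field_simp
        ring
      have hdiv : (θ (e+1) / (1-θ 0)) / ((1 - ∑ i ∈ range (e+1), θ i) / (1 - θ 0)) =
          θ (e+1) / (1 - ∑ i ∈ range (e+1), θ i) := by
        rw [div_div_div_cancel_right₀]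
        exact ht0ne
      rw [hw, hden, hdiv]
    rw [Finset.prod_congr rfl hfac, ← key]
    -- now pure algebra: peel LHS products
    rw [Finset.prod_range_succ' (f := fun e => (Nat.factorial (w e) : ℝ)),
        Finset.prod_range_succ' (f := fun e => θ e ^ w e)]
    have hprodθ : ∏ e ∈ range E, (θ (e+1) / (1 - θ 0)) ^ w (e+1) =
        (∏ e ∈ range E, θ (e+1) ^ w (e+1)) / (1 - θ 0) ^ (n - w 0) := by
      have h1 : ∀ e ∈ range E, (θ (e+1) / (1 - θ 0)) ^ w (e+1)
          = θ (e+1) ^ w (e+1) / (1 - θ 0) ^ w (e+1) := fun e _ => div_pow _ _ _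
      rw [Finset.prod_congr rfl h1, Finset.prod_div_distrib,
          Finset.prod_pow_eq_pow_sum]
      congr 2
      omega
    rw [hprodθ]
    -- empty-prefix simplifications for the 0-th factor
    simp only [range_zero, sum_empty, Nat.sub_zero, sub_zero, div_one]
    have hA : (0:ℝ) < ∏ e ∈ range E, (Nat.factorial (w (e+1)) : ℝ) :=
      Finset.prod_pos (fun _ _ => by positivity)
    have hch : ((n.choose (w 0)) : ℝ) * (Nat.factorial (w 0)) * (Nat.factorial (n - w 0))
        = Nat.factorial n := by
      exact_mod_cast congrArg (Nat.cast : ℕ → ℝ)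
        (Nat.choose_mul_factorial_mul_factorial hn0le)
    have hf0 : ((Nat.factorial (w 0)) : ℝ) ≠ 0 := by positivity
    have hfn0 : ((Nat.factorial (n - w 0)) : ℝ) ≠ 0 := by positivity
    have hpow : ((1:ℝ) - θ 0) ^ (n - w 0) ≠ 0 := pow_ne_zero _ ht0ne
    field_simp
    rw [← hch]
    ring

/-- Multinomial-to-binomial stick-breaking decomposition: the multinomial probability
weight factors as a product of binomial probability weights. -/
theorem multinomial_stick_breaking
    (E : ℕ) (hE : 1 ≤ E) (w : Fin E → ℕ) (n : ℕ) (hn : n = ∑ e, w e)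
    (θ : Fin E → ℝ) (hθ0 : ∀ e, 0 ≤ θ e) (hθsum : ∑ e, θ e = 1)
    (hθlt : ∀ e, ∑ i ∈ Finset.Iio e, θ i < 1) :
    (Nat.factorial n : ℝ) / (∏ e, (Nat.factorial (w e) : ℝ)) * ∏ e, θ e ^ w e =
      ∏ e,
        ((Nat.choose (n - ∑ i ∈ Finset.Iio e, w i) (w e) : ℝ) *
          (θ e / (1 - ∑ i ∈ Finset.Iio e, θ i)) ^ w e *
          (1 - θ e / (1 - ∑ i ∈ Finset.Iio e, θ i)) ^
            ((n - ∑ i ∈ Finset.Iio e, w i) - w e)) := by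
  classical
  set w' : ℕ → ℕ := fun i => if h : i < E then w ⟨i, h⟩ else 0 with hw'
  set θ' : ℕ → ℝ := fun i => if h : i < E then θ ⟨i, h⟩ else 0 with hθ'
  have hwe : ∀ e : Fin E, w' e.val = w e := fun e => by simp [hw', e.isLt]
  have hte : ∀ e : Fin E, θ' e.val = θ e := fun e => by simp [hθ', e.isLt]
  have hwsum : ∀ e : Fin E, ∑ i ∈ Finset.Iio e, w i = ∑ i ∈ Finset.range e.val, w' i := by
    intro e
    rw [← sum_Iio_fin_val w' e]
    exact Finset.sum_congr rfl (fun i _ => (hwe i).symm)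
  have htsum : ∀ e : Fin E, ∑ i ∈ Finset.Iio e, θ i = ∑ i ∈ Finset.range e.val, θ' i := by
    intro e
    rw [← sum_Iio_fin_val θ' e]
    exact Finset.sum_congr rfl (fun i _ => (hte i).symm)
  have key := aux_stick E w' θ' n
    (by
      rw [hn, ← Fin.sum_univ_eq_sum_range w' E]
      exact Finset.sum_congr rfl (fun e _ => (hwe e).symm))
    (fun e he => by rw [show e = (⟨e, he⟩ : Fin E).val from rfl, hte]; exact hθ0 _)
    (by
      rw [← Fin.sum_univ_eq_sum_range θ' E, ← hθsum]
      exact Finset.sum_congr rfl (fun e _ => hte e))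
    (fun e he => by
      rw [show Finset.range e = Finset.range ((⟨e, he⟩ : Fin E) : ℕ) from rfl,
        ← htsum ⟨e, he⟩]
      exact hθlt _)
  rw [show (∏ e, (Nat.factorial (w e) : ℝ)) =
        ∏ e ∈ Finset.range E, (Nat.factorial (w' e) : ℝ) by
      rw [← Fin.prod_univ_eq_prod_range (fun i => (Nat.factorial (w' i) : ℝ)) E]
      exact Finset.prod_congr rfl (fun e _ => by rw [hwe]),
    show (∏ e, θ e ^ w e) = ∏ e ∈ Finset.range E, θ' e ^ w' e by
      rw [← Fin.prod_univ_eq_prod_range (fun i => θ' i ^ w' i) E]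
      exact Finset.prod_congr rfl (fun e _ => by rw [hwe, hte]),
    key, ← Fin.prod_univ_eq_prod_range]
  refine Finset.prod_congr rfl (fun e _ => ?_)
  rw [hwe, hte, hwsum, htsum]
end

section
/- (Telescoping of the multinomial probability term.) Let E ≥ 1, let w : Fin E → ℕ, and let θ : Fin E → ℝ satisfy θ(e) ≥ 0 for all e, ∑_{e} θ(e) = 1, and ∑_{i<e} θ(i) < 1 for every e. Define θ̂(e) := θ(e) / (1 − ∑_{i<e} θ(i)). Then ∏_{e} θ(e)^{w(e)} = ∏_{e} [ θ̂(e)^{w(e)} · (1 − θ̂(e))^{∑_{i>e} w(i)} ]. -/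
/-- Telescoping of the multinomial probability term under the stick-breaking
reparameterization. -/
theorem multinomial_prob_telescope
    (E : ℕ) (hE : 1 ≤ E) (w : Fin E → ℕ)
    (θ : Fin E → ℝ) (hθ0 : ∀ e, 0 ≤ θ e) (hθsum : ∑ e, θ e = 1)
    (hθlt : ∀ e, ∑ i ∈ Finset.Iio e, θ i < 1) :
    ∏ e, θ e ^ w e =
      ∏ e,
        ((θ e / (1 - ∑ i ∈ Finset.Iio e, θ i)) ^ w e *
          (1 - θ e / (1 - ∑ i ∈ Finset.Iio e, θ i)) ^ (∑ i ∈ Finset.Ioi e, w i)) := by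
  classical
  set A : ℕ → ℝ := fun n => ∑ i ∈ Finset.univ.filter (fun i : Fin E => (i : ℕ) < n), θ i with hA
  set W : ℕ → ℕ := fun n => ∑ i ∈ Finset.univ.filter (fun i : Fin E => n ≤ (i : ℕ)), w i with hW
  set f : ℕ → ℝ := fun n => (1 - A n) ^ W n with hf
  have hIio : ∀ e : Fin E, ∑ i ∈ Finset.Iio e, θ i = A e := by
    intro e
    apply Finset.sum_congr _ (fun _ _ => rfl)
    ext i
    simp only [Finset.mem_Iio, Finset.mem_filter, Finset.mem_univ, true_and, Fin.lt_def]
  have hApos : ∀ e : Fin E, (0:ℝ) < 1 - A e := by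
    intro e; have := hθlt e; rw [hIio e] at this; linarith
  have hAsucc : ∀ e : Fin E, A ((e:ℕ) + 1) = A e + θ e := by
    intro e
    have hset : Finset.univ.filter (fun i : Fin E => (i:ℕ) < (e:ℕ) + 1)
        = insert e (Finset.univ.filter (fun i : Fin E => (i:ℕ) < (e:ℕ))) := by
      ext i
      simp [Nat.lt_succ_iff_lt_or_eq, Fin.ext_iff, or_comm]
      rw [Fin.le_def, Fin.lt_def]; omega
    rw [hA]; simp only
    rw [hset, Finset.sum_insert (by simp)]
    ring
  have hIoi : ∀ e : Fin E, ∑ i ∈ Finset.Ioi e, w i = W ((e:ℕ) + 1) := by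
    intro e
    apply Finset.sum_congr _ (fun _ _ => rfl)
    ext i
    simp only [Finset.mem_Ioi, Finset.mem_filter, Finset.mem_univ, true_and, Fin.lt_def]
    omega
  have hWsucc : ∀ e : Fin E, W (e:ℕ) = w e + W ((e:ℕ) + 1) := by
    intro e
    have hset : Finset.univ.filter (fun i : Fin E => (e:ℕ) ≤ (i:ℕ))
        = insert e (Finset.univ.filter (fun i : Fin E => (e:ℕ) + 1 ≤ (i:ℕ))) := by
      ext i
      simp only [Finset.mem_filter, Finset.mem_insert, Finset.mem_univ, true_and]
      constructor
      · intro h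
        rcases eq_or_lt_of_le h with h' | h'
        · left; exact (Fin.ext h'.symm)
        · right; exact h'
      · rintro (rfl | h)
        · exact le_refl _
        · omega
    rw [hW]; simp only
    rw [hset, Finset.sum_insert (by simp)]
  -- per factor rewrite
  have hfactor : ∀ e : Fin E,
      (θ e / (1 - ∑ i ∈ Finset.Iio e, θ i)) ^ w e *
        (1 - θ e / (1 - ∑ i ∈ Finset.Iio e, θ i)) ^ (∑ i ∈ Finset.Ioi e, w i)
      = θ e ^ w e * (f ((e:ℕ) + 1) / f (e:ℕ)) := by
    intro e
    have hne : (1 - A (e:ℕ)) ≠ 0 := ne_of_gt (hApos e)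
    rw [hIio e, hIoi e]
    have h1 : 1 - θ e / (1 - A (e:ℕ)) = (1 - A ((e:ℕ)+1)) / (1 - A (e:ℕ)) := by
      rw [hAsucc e]; field_simp; ring
    rw [h1, hf]
    simp only [hWsucc e]
    rw [div_pow, div_pow, pow_add]
    field_simp
  rw [Finset.prod_congr rfl (fun e _ => hfactor e), Finset.prod_mul_distrib]
  have hfE : f E = 1 := by
    have : W E = 0 := by
      rw [hW]; simp only
      apply Finset.sum_eq_zero
      intro i hi
      simp only [Finset.mem_filter] at hi
      omega
    rw [hf]; simp [this]
  have hf0 : f 0 = 1 := by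
    have : A 0 = 0 := by rw [hA]; simp
    rw [hf]; simp [this]
  have hprod : ∏ e : Fin E, (f ((e:ℕ) + 1) / f (e:ℕ)) = 1 := by
    rw [Finset.prod_div_distrib]
    have h1 : ∏ e : Fin E, f ((e:ℕ) + 1) = ∏ n ∈ Finset.range E, f (n + 1) := by
      rw [Finset.prod_range fun n => f (n+1)]
    have h2 : ∏ e : Fin E, f (e:ℕ) = ∏ n ∈ Finset.range E, f n := by
      rw [Finset.prod_range fun n => f n]
    rw [h1, h2]
    have := (Finset.prod_range_succ' f E).symm.trans (Finset.prod_range_succ f E)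
    rw [hf0, hfE, mul_one, mul_one] at this
    rw [this, div_self]
    intro hzero
    rw [Finset.prod_eq_zero_iff] at hzero
    obtain ⟨n, hn, hfn⟩ := hzero
    simp only [Finset.mem_range] at hn
    have : (0:ℝ) < 1 - A n := hApos ⟨n, hn⟩
    rw [hf] at hfn
    exact absurd hfn (pow_ne_zero _ (ne_of_gt this))
  rw [hprod, mul_one]
end

section
/- (Multinomial as a chain of binomials and multinomials.) Let M ≥ 1, let E : Fin M → ℕ, let ι := Σ (m : Fin M), Fin (E m), and let θ : ι → ℝ with θ(x) ≥ 0 for all x and ∑_{x ∈ ι} θ(x) = 1. Set α(m) := ∑_{i} θ(⟨m,i⟩); assume α(m) > 0 for every m and ∑_{j<m} α(j) < 1 for every m, and define η(m) := α(m) / (1 − ∑_{j<m} α(j)) and λ(⟨m,i⟩) := θ(⟨m,i⟩) / α(m). Let u : ι → ℕ, set v(m) := ∑_{i} u(⟨m,i⟩), n := ∑_{m} v(m), and r(m) := n − ∑_{j<m} v(j). Then (n! / ∏_{x ∈ ι} u(x)!) · ∏_{x ∈ ι} θ(x)^{u(x)} = ∏_{m} [ C(r(m), v(m)) · η(m)^{v(m)}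 · (1 − η(m))^{r(m) − v(m)} ] · ∏_{m} [ (v(m)! / ∏_{i} u(⟨m,i⟩)!) · ∏_{i} λ(⟨m,i⟩)^{u(⟨m,i⟩)} ], with all factorials and binomial coefficients cast to ℝ. -/
lemma chain_choose {α : Type*} [LinearOrder α] [DecidableEq α] (v : α → ℕ) (s : Finset α) :
    ∏ m ∈ s, ((∑ j ∈ s.filter (m ≤ ·), v j).choose (v m)) = Nat.multinomial s v := by
  induction s using Finset.induction_on_min with
  | empty => simp
  | insert a s ha ih =>
    have has : a ∉ s := fun h => lt_irrefl a (ha a h)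
    rw [Finset.prod_insert has, Nat.multinomial_insert has]
    have h1 : (insert a s).filter (a ≤ ·) = insert a s := by
      apply Finset.filter_true_of_mem
      intro x hx
      rcases Finset.mem_insert.mp hx with h | h
      · exact h ▸ le_refl a
      · exact (ha x h).le
    have h2 : ∀ m ∈ s, (insert a s).filter (m ≤ ·) = s.filter (m ≤ ·) := by
      intro m hm
      rw [Finset.filter_insert, if_neg (not_le.mpr (ha m hm))]
    rw [h1, Finset.sum_insert has, ← ih]
    congr 1
    exact Finset.prod_congr rfl fun m hm => by rw [h2 m hm]

lemma telescope_prod (g : ℕ → ℝ) (M : ℕ) (hg : ∀ i < M, g i ≠ 0) :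
    (∏ i ∈ Finset.range M, (g (i + 1) / g i)) * g 0 = g M := by
  induction M with
  | zero => simp
  | succ k ih =>
    rw [Finset.prod_range_succ, mul_right_comm,
      ih (fun i hi => hg i (hi.trans (Nat.lt_succ_self k))),
      mul_div_assoc', mul_comm, mul_div_assoc, div_self (hg k (Nat.lt_succ_self k)), mul_one]

lemma sum_Iio_fin {β : Type*} [AddCommMonoid β] {M : ℕ} (f : Fin M → β) (m : Fin M) :
    ∑ j ∈ Finset.Iio m, f j
      = ∑ k ∈ Finset.range m.val, (if h : k < M then f ⟨k, h⟩ else 0) := by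
  rw [← Nat.Iio_eq_range, ← Fin.map_valEmbedding_Iio, Finset.sum_map]
  exact Finset.sum_congr rfl fun j _ => by simp [j.isLt]

/-- Multinomial as a chain of binomials and multinomials: the multinomial weight of
`u` equals the product over groups of a binomial stick-breaking factor for the group
sum times the within-group multinomial weight. -/
theorem multinomial_chain_binomial_multinomial
    (M : ℕ) (hM : 1 ≤ M) (E : Fin M → ℕ)
    (θ : ((m : Fin M) × Fin (E m)) → ℝ) (hθ0 : ∀ x, 0 ≤ θ x)
    (hθsum : ∑ x : (m : Fin M) × Fin (E m), θ x = 1)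
    (hα : ∀ m : Fin M, 0 < ∑ i : Fin (E m), θ ⟨m, i⟩)
    (hαlt : ∀ m : Fin M, ∑ j ∈ Finset.Iio m, (∑ i : Fin (E j), θ ⟨j, i⟩) < 1)
    (u : ((m : Fin M) × Fin (E m)) → ℕ)
    (v : Fin M → ℕ) (hv : ∀ m : Fin M, v m = ∑ i : Fin (E m), u ⟨m, i⟩)
    (n : ℕ) (hn : n = ∑ m, v m) :
    (Nat.factorial n : ℝ) / (∏ x, (Nat.factorial (u x) : ℝ)) * ∏ x, θ x ^ u x =
      (∏ m,
        ((Nat.choose (n - ∑ j ∈ Finset.Iio m, v j) (v m) : ℝ) *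
          ((∑ i : Fin (E m), θ ⟨m, i⟩) /
              (1 - ∑ j ∈ Finset.Iio m, (∑ i : Fin (E j), θ ⟨j, i⟩))) ^ v m *
          (1 - (∑ i : Fin (E m), θ ⟨m, i⟩) /
              (1 - ∑ j ∈ Finset.Iio m, (∑ i : Fin (E j), θ ⟨j, i⟩))) ^
            ((n - ∑ j ∈ Finset.Iio m, v j) - v m))) *
      ∏ m,
        ((Nat.factorial (v m) : ℝ) / (∏ i, (Nat.factorial (u ⟨m, i⟩) : ℝ)) *
          ∏ i : Fin (E m),
            (θ ⟨m, i⟩ / ∑ j : Fin (E m), θ ⟨m, j⟩) ^ u ⟨m, i⟩) := by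
  classical
  set A : Fin M → ℝ := fun m => ∑ i : Fin (E m), θ ⟨m, i⟩ with hA
  set A' : ℕ → ℝ := fun k => if h : k < M then A ⟨k, h⟩ else 0 with hA'
  set v' : ℕ → ℕ := fun k => if h : k < M then v ⟨k, h⟩ else 0 with hv'
  set S : ℕ → ℝ := fun k => ∑ j ∈ Finset.range k, A' j with hS
  set V : ℕ → ℕ := fun k => ∑ j ∈ Finset.range k, v' j with hV
  set g : ℕ → ℝ := fun k => (1 - S k) ^ (n - V k) with hg
  set L : Fin M → ℝ := fun m => ∏ i : Fin (E m), (θ ⟨m, i⟩ / A m) ^ u ⟨m, i⟩ with hL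
  set D : Fin M → ℝ := fun m => ∏ i : Fin (E m), ((u ⟨m, i⟩).factorial : ℝ) with hD
  have hAfold : ∀ m : Fin M, (∑ i : Fin (E m), θ ⟨m, i⟩) = A m := fun _ => rfl
  have hSm : ∀ m : Fin M, ∑ j ∈ Finset.Iio m, A j = S m.val := fun m => sum_Iio_fin A m
  have hVm : ∀ m : Fin M, ∑ j ∈ Finset.Iio m, v j = V m.val := fun m => sum_Iio_fin v m
  have hAsum : ∑ m : Fin M, A m = 1 := by
    rw [← hθsum, ← Finset.univ_sigma_univ, Finset.sum_sigma]
  have hSM : S M = 1 := by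
    show (∑ j ∈ Finset.range M, A' j) = 1
    rw [← Fin.sum_univ_eq_sum_range, ← hAsum]
    exact Finset.sum_congr rfl fun i _ => by simp [hA']
  have hVM : V M = n := by
    show (∑ j ∈ Finset.range M, v' j) = n
    rw [← Fin.sum_univ_eq_sum_range, hn]
    exact Finset.sum_congr rfl fun i _ => by simp [hv']
  have hSpos : ∀ k, k < M → 0 < 1 - S k := by
    intro k hk
    have h1 := hαlt ⟨k, hk⟩
    have h2 : (∑ j ∈ Finset.Iio (⟨k, hk⟩ : Fin M), A j) < 1 := h1
    rw [hSm] at h2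
    linarith
  have hVmono : ∀ k, V k ≤ n := by
    intro k
    rcases le_or_gt M k with h | h
    · have heq : V k = V M := by
        show (∑ j ∈ Finset.range k, v' j) = ∑ j ∈ Finset.range M, v' j
        refine (Finset.sum_subset (Finset.range_subset_range.mpr h) ?_).symm
        intro x _ hx
        simp only [Finset.mem_range, not_lt] at hx
        show (if h : x < M then v ⟨x, h⟩ else 0) = 0
        exact dif_neg (not_lt.mpr hx)
      rw [heq, hVM]
    · rw [← hVM]
      exact Finset.sum_le_sum_of_subset (Finset.range_subset_range.mpr h.le)
  have hVstep : ∀ k, V (k + 1) = V k + v' k := fun k => Finset.sum_range_succ v' k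
  have hSstep : ∀ k, S (k + 1) = S k + A' k := fun k => Finset.sum_range_succ A' k
  have hvle : ∀ m : Fin M, v m ≤ n - V m.val := by
    intro m
    have h1 : V m.val + v m ≤ n := by
      have h2 := hVmono (m.val + 1)
      rw [hVstep] at h2
      have h3 : v' m.val = v m := dif_pos m.isLt
      omega
    omega
  have hgne : ∀ k, k < M → g k ≠ 0 := fun k hk => pow_ne_zero _ (ne_of_gt (hSpos k hk))
  have hfac : ∀ m : Fin M,
      (A m / (1 - S m.val)) ^ v m * (1 - A m / (1 - S m.val)) ^ ((n - V m.val) - v m)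
        = A m ^ v m * (g (m.val + 1) / g m.val) := by
    intro m
    have hk := m.isLt
    have hpos := hSpos m.val hk
    have hne : (1 - S m.val) ≠ 0 := ne_of_gt hpos
    have hA'm : A' m.val = A m := dif_pos hk
    have e1 : 1 - A m / (1 - S m.val) = (1 - S (m.val + 1)) / (1 - S m.val) := by
      rw [hSstep, hA'm]
      field_simp
      ring
    have e2 : n - V (m.val + 1) = (n - V m.val) - v m := by
      rw [hVstep]
      have h3 : v' m.val = v m := dif_pos hk
      omega
    have hgm1 : g (m.val + 1) = (1 - S (m.val + 1)) ^ ((n - V m.val) - v m) := by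
      rw [← e2]
    have hgm : g m.val = (1 - S m.val) ^ (v m + ((n - V m.val) - v m)) := by
      rw [Nat.add_sub_cancel' (hvle m)]
    rw [e1, div_pow, div_pow, hgm1, hgm, pow_add, div_mul_div_comm, mul_div_assoc]
  have hBin : (∏ m : Fin M,
      ((A m / (1 - S m.val)) ^ v m * (1 - A m / (1 - S m.val)) ^ ((n - V m.val) - v m)))
        = ∏ m : Fin M, A m ^ v m := by
    rw [Finset.prod_congr rfl fun m _ => hfac m, Finset.prod_mul_distrib]
    have htel : (∏ m : Fin M, (g (m.val + 1) / g m.val)) = 1 := by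
      have h0 : g 0 = 1 := by
        show (1 - S 0) ^ (n - V 0) = 1
        have : S 0 = 0 := by simp [hS]
        have hV0 : V 0 = 0 := by simp [hV]
        rw [this, hV0]; simp
      have hMg : g M = 1 := by
        show (1 - S M) ^ (n - V M) = 1
        rw [hSM, hVM]; simp
      have htp := telescope_prod g M hgne
      rw [h0, mul_one, hMg] at htp
      rw [Fin.prod_univ_eq_prod_range (fun k => g (k + 1) / g k) M, htp]
    rw [htel, mul_one]
  -- combinatorial identity
  have hIci : ∀ m : Fin M, Finset.univ.filter (m ≤ ·) = Finset.Ici m := by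
    intro m; ext j; simp
  have hrIci : ∀ m : Fin M, ∑ j ∈ Finset.Ici m, v j = n - V m.val := by
    intro m
    have hdisj : Disjoint (Finset.Iio m) (Finset.Ici m) := by
      simp [Finset.disjoint_left]
    have hunion : Finset.Iio m ∪ Finset.Ici m = Finset.univ := by
      ext j; simp [lt_or_ge j m]
    have hsum : ∑ j ∈ Finset.Iio m, v j + ∑ j ∈ Finset.Ici m, v j = n := by
      rw [← Finset.sum_union hdisj, hunion, hn]
    rw [hVm] at hsum
    omega
  have hChoose : ((∏ m : Fin M, Nat.choose (n - V m.val) (v m)) *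
      ∏ m : Fin M, Nat.factorial (v m)) = Nat.factorial n := by
    have h1 := chain_choose v (Finset.univ : Finset (Fin M))
    rw [Finset.prod_congr rfl (fun m _ => by rw [hIci m, hrIci m])] at h1
    rw [h1, mul_comm, Nat.multinomial_spec, hn]
  have hChooseR : ((Nat.factorial n : ℝ)) =
      (∏ m : Fin M, (Nat.choose (n - V m.val) (v m) : ℝ)) *
        ∏ m : Fin M, (Nat.factorial (v m) : ℝ) := by
    rw [← Nat.cast_prod, ← Nat.cast_prod, ← Nat.cast_mul, hChoose]
  -- θ product decomposition
  have hθdec : (∏ x : ((m : Fin M) × Fin (E m)), θ x ^ u x)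
      = ∏ m : Fin M, (A m ^ v m * L m) := by
    rw [← Finset.univ_sigma_univ, Finset.prod_sigma]
    refine Finset.prod_congr rfl fun m _ => ?_
    have hAne : A m ≠ 0 := ne_of_gt (hα m)
    show (∏ i : Fin (E m), θ ⟨m, i⟩ ^ u ⟨m, i⟩)
        = A m ^ v m * ∏ i : Fin (E m), (θ ⟨m, i⟩ / A m) ^ u ⟨m, i⟩
    rw [Finset.prod_congr rfl (fun i _ => div_pow (θ ⟨m, i⟩) (A m) (u ⟨m, i⟩)),
      Finset.prod_div_distrib, Finset.prod_pow_eq_pow_sum, ← hv m]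
    field_simp
  have hufac : (∏ x : ((m : Fin M) × Fin (E m)), (Nat.factorial (u x) : ℝ))
      = ∏ m : Fin M, D m := by
    rw [← Finset.univ_sigma_univ, Finset.prod_sigma]
  -- fold the goal
  simp only [hAfold, hSm, hVm]
  simp only [show ∀ m : Fin M,
      (∏ i : Fin (E m), (θ ⟨m, i⟩ / A m) ^ u ⟨m, i⟩) = L m from fun _ => rfl,
    show ∀ m : Fin M,
      (∏ i : Fin (E m), ((u ⟨m, i⟩).factorial : ℝ)) = D m from fun _ => rfl]
  rw [hufac, hθdec]
  have hRHS1 : (∏ m : Fin M,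
        ((Nat.choose (n - V m.val) (v m) : ℝ) *
          (A m / (1 - S m.val)) ^ v m *
          (1 - A m / (1 - S m.val)) ^ ((n - V m.val) - v m)))
      = (∏ m : Fin M, (Nat.choose (n - V m.val) (v m) : ℝ)) *
          ∏ m : Fin M, A m ^ v m := by
    rw [← hBin, ← Finset.prod_mul_distrib]
    exact Finset.prod_congr rfl fun m _ => by ring
  have h1 : ∏ m : Fin M, (A m ^ v m * L m)
      = (∏ m : Fin M, A m ^ v m) * ∏ m : Fin M, L m := Finset.prod_mul_distrib
  have h2 : ∏ m : Fin M, ((Nat.factorial (v m) : ℝ) / D m * L m)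
      = ((∏ m : Fin M, (Nat.factorial (v m) : ℝ)) / ∏ m : Fin M, D m) *
          ∏ m : Fin M, L m := by
    rw [Finset.prod_mul_distrib, Finset.prod_div_distrib]
  rw [hRHS1, h1, h2, hChooseR]
  ring
end
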